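/- Normalization of the regularized Shannon kernel: for σ > 0 and Δ = 1, ∫_ℝ [sin(πx)/(πx)] e^{−x²/(2σ²)} dx = erf(πσ/√2) = 1 − erfc(πσ/√2); in particular the integral is strictly less than 1 and tends to 1 as σ → ∞. -/

import Mathlib

open Real MeasureTheory Filter

/-- The error function `erf`. -/
noncomputable def erf (z : ℝ) : ℝ := (2 / Real.sqrt π) * ∫ t in (0:ℝ)..z, Real.exp (-t ^ 2)

/-- The complementary error function `erfc`. -/
noncomputable def erfc (z : ℝ) : ℝ := 1 - erf z

/-- The regularized Shannon kernel with `Δ = 1` (value `1` at `x = 0`). -/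
noncomputable def regShannonOne (σ : ℝ) (x : ℝ) : ℝ :=
  (if x = 0 then 1 else Real.sin (π * x) / (π * x)) * Real.exp (-x ^ 2 / (2 * σ ^ 2))

section Aux

open Complex


lemma cosGauss {a : ℝ} (ha : 0 < a) (b : ℝ) :
    ∫ x : ℝ, Real.cos (b * x) * Real.exp (-a * x ^ 2)
      = Real.sqrt (π / a) * Real.exp (-b ^ 2 / (4 * a)) := by
  have hre : (0:ℝ) < (a : ℂ).re := by simpa using ha
  have hint : Integrable (fun x : ℝ => cexp (Complex.I * b * x) * cexp (-(a:ℂ) * x ^ 2)) := by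
    have := integrable_cexp_quadratic (b := (a:ℂ)) hre (Complex.I * b) 0
    apply this.congr (Filter.Eventually.of_forall fun x => ?_)
    rw [← Complex.exp_add]
    ring_nf
  have key := fourierIntegral_gaussian (b := (a:ℂ)) hre (b : ℂ)
  have hre2 : RCLike.re (∫ x : ℝ, cexp (Complex.I * b * x) * cexp (-(a:ℂ) * x ^ 2))
      = ∫ x : ℝ, Real.cos (b * x) * Real.exp (-a * x ^ 2) := by
    rw [← integral_re hint]
    congr 1
    ext x
    have h3 : cexp (Complex.I * b * x) * cexp (-(a:ℂ) * x ^ 2)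
        = cexp (((b*x : ℝ):ℂ) * Complex.I) * ((Real.exp (-a * x^2) : ℝ) : ℂ) := by
      rw [Complex.ofReal_exp]
      congr 1
      · congr 1; push_cast; ring
      · congr 1; push_cast; ring
    rw [h3]
    simp only [RCLike.re_to_complex]
    rw [Complex.mul_re, Complex.ofReal_re, Complex.ofReal_im, mul_zero, sub_zero,
      Complex.exp_ofReal_mul_I_re]
  rw [← hre2, key]
  have h1 : ((π:ℂ) / a) ^ (1/2 : ℂ) = ((Real.sqrt (π/a) : ℝ) : ℂ) := by
    rw [Real.sqrt_eq_rpow, Complex.ofReal_cpow (by positivity)]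
    push_cast; ring_nf
  have h2 : cexp (-(b:ℂ) ^ 2 / (4 * a)) = ((Real.exp (-b^2/(4*a)) : ℝ) : ℂ) := by
    rw [Complex.ofReal_exp]
    congr 1; push_cast; ring
  rw [h1, h2, ← Complex.ofReal_mul]
  exact Complex.ofReal_re _

end Aux

lemma coefEq {σ : ℝ} (hσ : 0 < σ) :
    π⁻¹ * (Real.sqrt 2 * Real.sqrt π * σ * (σ / Real.sqrt 2)⁻¹) = 2 / Real.sqrt π := by
  have hs2 : Real.sqrt 2 * Real.sqrt 2 = 2 := Real.mul_self_sqrt (by norm_num)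
  have hsπ : Real.sqrt π * Real.sqrt π = π := Real.mul_self_sqrt Real.pi_pos.le
  have h5 : Real.sqrt 2 * Real.sqrt π * σ * (Real.sqrt 2 / σ) = 2 * Real.sqrt π := by
    field_simp
    linear_combination hs2
  rw [inv_div, h5, inv_mul_eq_div,
    div_eq_div_iff (ne_of_gt Real.pi_pos) (ne_of_gt (Real.sqrt_pos.2 Real.pi_pos))]
  linear_combination 2 * hsπ

lemma mainEq {σ : ℝ} (hσ : 0 < σ) :
    (∫ x : ℝ, regShannonOne σ x) = erf (π * σ / Real.sqrt 2) := by
  have hσ' : σ ≠ 0 := ne_of_gt hσ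
  set c : ℝ := (2 * σ ^ 2)⁻¹ with hc_def
  have hc : 0 < c := by positivity
  have hg_int : Integrable (fun x : ℝ => Real.exp (-c * x ^ 2)) := integrable_exp_neg_mul_sq hc
  set G : ℝ → ℝ := fun a => ∫ x : ℝ, Real.sin (a * x) * (Real.exp (-c * x ^ 2) / x) with hG_def
  have hmeas : ∀ a : ℝ, AEStronglyMeasurable
      (fun x : ℝ => Real.sin (a * x) * (Real.exp (-c * x ^ 2) / x)) volume := by
    intro a
    apply Measurable.aestronglyMeasurable
    exact (Real.measurable_sin.comp (measurable_id.const_mul a)).mul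
      ((Real.measurable_exp.comp ((measurable_id.pow_const 2).const_mul (-c))).div measurable_id)
  have hbound : ∀ a x : ℝ, |Real.sin (a * x) * (Real.exp (-c * x ^ 2) / x)|
      ≤ |a| * Real.exp (-c * x ^ 2) := by
    intro a x
    rcases eq_or_ne x 0 with hx | hx
    · simp only [hx, div_zero, mul_zero, abs_zero]
      positivity
    · have h1 : |Real.sin (a * x)| ≤ |a| * |x| := by
        simpa [abs_mul] using Real.abs_sin_le_abs (x := a * x)
      have hxpos : (0:ℝ) < |x| := abs_pos.2 hx
      have hE : (0:ℝ) < Real.exp (-c * x ^ 2) := Real.exp_pos _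
      rw [abs_mul, abs_div, abs_of_pos hE, ← mul_div_assoc, div_le_iff₀ hxpos]
      nlinarith [hE.le, abs_nonneg (Real.sin (a * x))]
  have hint : ∀ a : ℝ, Integrable
      (fun x : ℝ => Real.sin (a * x) * (Real.exp (-c * x ^ 2) / x)) := by
    intro a
    refine (hg_int.const_mul |a|).mono (hmeas a) (Filter.Eventually.of_forall fun x => ?_)
    rw [Real.norm_eq_abs, Real.norm_eq_abs]
    exact (hbound a x).trans (le_abs_self _)
  have h0 : ∀ᵐ (x : ℝ), x ≠ 0 := by
    rw [MeasureTheory.ae_iff]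
    simpa using (MeasureTheory.measure_singleton (0:ℝ))
  set D : ℝ → ℝ := fun a => Real.sqrt (2 * π * σ ^ 2) * Real.exp (-a ^ 2 * σ ^ 2 / 2) with hD_def
  have hD : ∀ a : ℝ, HasDerivAt G (D a) a := by
    intro a
    have key := hasDerivAt_integral_of_dominated_loc_of_deriv_le (Metric.ball_mem_nhds a one_pos)
      (μ := volume)
      (F := fun a x => Real.sin (a * x) * (Real.exp (-c * x ^ 2) / x))
      (F' := fun a x => Real.cos (a * x) * Real.exp (-c * x ^ 2))
      (bound := fun x => Real.exp (-c * x ^ 2)) (x₀ := a)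
      (Filter.Eventually.of_forall fun a' => hmeas a')
      (hint a)
      ((by fun_prop : Continuous fun x => Real.cos (a * x) * Real.exp (-c * x ^ 2)).aestronglyMeasurable)
      (Filter.Eventually.of_forall fun x => fun a' _ => by
        rw [Real.norm_eq_abs, abs_mul]
        calc |Real.cos (a' * x)| * |Real.exp (-c * x ^ 2)|
            ≤ 1 * |Real.exp (-c * x ^ 2)| :=
              mul_le_mul_of_nonneg_right (Real.abs_cos_le_one _) (abs_nonneg _)
          _ = Real.exp (-c * x ^ 2) := by rw [one_mul, abs_of_pos (Real.exp_pos _)])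
      hg_int
      (h0.mono fun x hx => fun a' _ => by
        have h1 : HasDerivAt (fun t : ℝ => Real.sin (t * x))
            (Real.cos (a' * x) * x) a' := (hasDerivAt_mul_const x).sin
        have h2 := h1.mul_const (Real.exp (-c * x ^ 2) / x)
        exact h2.congr_deriv (by field_simp))
    have hval : (∫ x : ℝ, Real.cos (a * x) * Real.exp (-c * x ^ 2)) = D a := by
      rw [cosGauss hc a, hD_def]
      congr 1
      · congr 1
        rw [hc_def]
        field_simp
      · congr 1
        rw [hc_def]
        field_simp
        ring
    rw [← hval]
    exact key.2
  have hG0 : G 0 = 0 := by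
    simp [hG_def]
  have hftc : ∫ a in (0:ℝ)..π, D a = G π - G 0 :=
    intervalIntegral.integral_eq_sub_of_hasDerivAt (fun t _ => hD t)
      ((Continuous.intervalIntegrable (by continuity) _ _))
  set k : ℝ := σ / Real.sqrt 2 with hk_def
  have hk : 0 < k := div_pos hσ (Real.sqrt_pos.2 two_pos)
  have hsub : ∫ a in (0:ℝ)..π, D a
      = Real.sqrt (2 * π * σ ^ 2) * (k⁻¹ * ∫ t in (0:ℝ)..(π * σ / Real.sqrt 2), Real.exp (-t ^ 2)) := by
    rw [hD_def]
    rw [intervalIntegral.integral_const_mul]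
    congr 1
    have hexp : ∀ a : ℝ, Real.exp (-a ^ 2 * σ ^ 2 / 2) = Real.exp (-(k * a) ^ 2) := by
      intro a
      congr 1
      rw [hk_def, mul_pow, div_pow, Real.sq_sqrt (by norm_num : (0:ℝ) ≤ 2)]
      ring
    simp_rw [hexp]
    rw [intervalIntegral.integral_comp_mul_left (fun t => Real.exp (-t ^ 2)) (ne_of_gt hk)]
    rw [smul_eq_mul, mul_zero, show k * π = π * σ / Real.sqrt 2 by rw [hk_def]; ring]
  have hGπ : G π = Real.sqrt (2 * π * σ ^ 2) * (k⁻¹ * ∫ t in (0:ℝ)..(π * σ / Real.sqrt 2), Real.exp (-t ^ 2)) := by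
    rw [← hsub, hftc, hG0, sub_zero]
  have hcongr : (∫ x : ℝ, regShannonOne σ x)
      = ∫ x : ℝ, π⁻¹ * (Real.sin (π * x) * (Real.exp (-c * x ^ 2) / x)) := by
    apply integral_congr_ae
    refine h0.mono fun x hx => ?_
    rw [regShannonOne, if_neg hx]
    have he : Real.exp (-x ^ 2 / (2 * σ ^ 2)) = Real.exp (-c * x ^ 2) := by
      congr 1
      rw [hc_def]
      field_simp
    rw [he]
    field_simp
  have hfold : (∫ x : ℝ, Real.sin (π * x) * (Real.exp (-c * x ^ 2) / x)) = G π := rfl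
  rw [hcongr, integral_const_mul, hfold, hGπ, erf]
  have hs2 : Real.sqrt 2 * Real.sqrt 2 = 2 := Real.mul_self_sqrt (by norm_num)
  have hsπ : Real.sqrt π * Real.sqrt π = π := Real.mul_self_sqrt Real.pi_pos.le
  have hsqrt : Real.sqrt (2 * π * σ ^ 2) = Real.sqrt 2 * Real.sqrt π * σ := by
    rw [Real.sqrt_mul (by positivity), Real.sqrt_mul (by norm_num), Real.sqrt_sq hσ.le]
  rw [hsqrt]
  have hsπ' : Real.sqrt π ≠ 0 := by positivity
  have hs2' : Real.sqrt 2 ≠ 0 := by positivity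
  have hcoef : π⁻¹ * (Real.sqrt 2 * Real.sqrt π * σ * k⁻¹) = 2 / Real.sqrt π := by
    rw [hk_def]; exact coefEq hσ
  calc π⁻¹ * (Real.sqrt 2 * Real.sqrt π * σ *
        (k⁻¹ * ∫ t in (0:ℝ)..(π * σ / Real.sqrt 2), Real.exp (-t ^ 2)))
      = (π⁻¹ * (Real.sqrt 2 * Real.sqrt π * σ * k⁻¹)) *
        ∫ t in (0:ℝ)..(π * σ / Real.sqrt 2), Real.exp (-t ^ 2) := by ring
    _ = _ := by rw [hcoef]


lemma gauss_integrable : Integrable (fun t : ℝ => Real.exp (-t ^ 2)) := by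
  have := integrable_exp_neg_mul_sq (b := (1:ℝ)) one_pos
  simpa using this

lemma gauss_Ioi : ∫ t in Set.Ioi (0:ℝ), Real.exp (-t ^ 2) = Real.sqrt π / 2 := by
  have := integral_gaussian_Ioi 1
  simpa using this

lemma erf_lt_one {z : ℝ} (hz : 0 < z) : erf z < 1 := by
  have hint := gauss_integrable
  have hsplit : ∫ t in Set.Ioi (0:ℝ), Real.exp (-t ^ 2)
      = (∫ t in (0:ℝ)..z, Real.exp (-t ^ 2)) + ∫ t in Set.Ioi z, Real.exp (-t ^ 2) := by
    rw [intervalIntegral.integral_of_le hz.le,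
      ← MeasureTheory.setIntegral_union Set.Ioc_disjoint_Ioi_same measurableSet_Ioi
        hint.integrableOn hint.integrableOn, Set.Ioc_union_Ioi_eq_Ioi hz.le]
  have htail : 0 < ∫ t in Set.Ioi z, Real.exp (-t ^ 2) := by
    rw [MeasureTheory.setIntegral_pos_iff_support_of_nonneg_ae
      (Filter.Eventually.of_forall fun t => (Real.exp_pos _).le) hint.integrableOn]
    have : Function.support (fun t : ℝ => Real.exp (-t ^ 2)) = Set.univ := by
      ext t; simp [Function.support, (Real.exp_pos _).ne']
    rw [this, Set.univ_inter]
    simp [Real.volume_Ioi]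
  have hI : (∫ t in (0:ℝ)..z, Real.exp (-t ^ 2)) < Real.sqrt π / 2 := by
    rw [gauss_Ioi] at hsplit
    linarith
  have hpos : (0:ℝ) < 2 / Real.sqrt π := by positivity
  have := mul_lt_mul_of_pos_left hI hpos
  rw [erf]
  calc (2 / Real.sqrt π) * ∫ t in (0:ℝ)..z, Real.exp (-t ^ 2)
      < (2 / Real.sqrt π) * (Real.sqrt π / 2) := this
    _ = 1 := by
        rw [div_mul_div_comm]
        rw [div_eq_one_iff_eq (by positivity)]
        ring
  done

lemma erf_tendsto : Tendsto (fun σ : ℝ => erf (π * σ / Real.sqrt 2)) atTop (nhds 1) := by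
  have h1 : Tendsto (fun σ : ℝ => π * σ / Real.sqrt 2) atTop atTop := by
    apply Tendsto.atTop_div_const (Real.sqrt_pos.2 two_pos)
    exact Tendsto.const_mul_atTop Real.pi_pos tendsto_id
  have h2 := MeasureTheory.intervalIntegral_tendsto_integral_Ioi (μ := volume) 0
    gauss_integrable.integrableOn h1
  rw [gauss_Ioi] at h2
  have h3 := h2.const_mul (2 / Real.sqrt π)
  have h4 : (2 / Real.sqrt π) * (Real.sqrt π / 2) = 1 := by
    rw [div_mul_div_comm, div_eq_one_iff_eq (by positivity)]
    ring
  rw [h4] at h3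
  exact h3


theorem regShannon_normalization :
    (∀ σ : ℝ, 0 < σ →
      (∫ x : ℝ, regShannonOne σ x) = erf (π * σ / Real.sqrt 2) ∧
      (∫ x : ℝ, regShannonOne σ x) = 1 - erfc (π * σ / Real.sqrt 2) ∧
      (∫ x : ℝ, regShannonOne σ x) < 1) ∧
    Tendsto (fun σ : ℝ => ∫ x : ℝ, regShannonOne σ x) atTop (nhds 1) := by
  constructor
  · intro σ hσ
    refine ⟨mainEq hσ, ?_, ?_⟩
    · rw [mainEq hσ, erfc]; ring
    · rw [mainEq hσ]
      exact erf_lt_one (by positivity)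
  · refine Tendsto.congr' ?_ erf_tendsto
    filter_upwards [eventually_gt_atTop (0:ℝ)] with σ hσ
    exact (mainEq hσ).symm
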